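/- For every hyperbolic-valued probability distribution P on n ≥ 2 points: 0 ⪯ G_𝔻(P) ⪯ (s⁽¹⁾(P)e₁ + s⁽²⁾(P)e₂)(1 − 1/n), with the upper bound attained iff P = U_n^{s(P)} and the lower bound attained iff P is a hyperbolic vertex distribution. -/

import Mathlib

/-- Hyperbolic numbers in idempotent coordinates. -/
noncomputable abbrev HypD : Type := ℝ × ℝ

lemma helper (n : ℕ) (hn : 2 ≤ n) (q : Fin n → ℝ) (s : ℝ) (hs : s = 0 ∨ s = 1)
    (hq : ∀ j, 0 ≤ q j) (hsum : ∑ j, q j = s) :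
    0 ≤ s - ∑ j, q j ^ 2 ∧
    s - ∑ j, q j ^ 2 ≤ s * (1 - 1 / n) ∧
    (s - ∑ j, q j ^ 2 = s * (1 - 1 / n) ↔ ∀ j, q j = s / n) ∧
    (s - ∑ j, q j ^ 2 = 0 ↔ (s = 1 → ∃ α : Fin n, ∀ j, q j = if j = α then 1 else 0)) := by
  have hnpos : 0 < n := lt_of_lt_of_le two_pos hn
  have hn0 : (n : ℝ) ≠ 0 := Nat.cast_ne_zero.mpr hnpos.ne'
  rcases hs with rfl | rfl
  · have hzero : ∀ j, q j = 0 := fun j =>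
      (Finset.sum_eq_zero_iff_of_nonneg (fun i _ => hq i)).mp hsum j (Finset.mem_univ j)
    simp [hzero]
  · -- s = 1
    have hle1 : ∀ j, q j ≤ 1 := by
      intro j
      rw [← hsum]
      exact Finset.single_le_sum (fun i _ => hq i) (Finset.mem_univ j)
    -- identity: 1 - ∑ q² = ∑ q(1-q)
    have idA : ∑ j, q j * (1 - q j) = 1 - ∑ j, q j ^ 2 := by
      have h1 : ∑ j, q j * (1 - q j) = (∑ j, q j) - ∑ j, q j ^ 2 := by
        rw [← Finset.sum_sub_distrib]
        exact Finset.sum_congr rfl (fun j _ => by ring)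
      rw [h1, hsum]
    -- identity: ∑ (q - 1/n)² = ∑ q² - 1/n
    have idB : ∑ j, (q j - 1 / n) ^ 2 = (∑ j, q j ^ 2) - 1 / n := by
      have : ∀ j, (q j - 1 / n) ^ 2 = q j ^ 2 - (2 / n) * q j + 1 / (n:ℝ) ^ 2 := by
        intro j; field_simp; ring
      rw [Finset.sum_congr rfl (fun j _ => this j)]
      rw [Finset.sum_add_distrib, Finset.sum_sub_distrib, ← Finset.mul_sum, hsum]
      simp [Finset.sum_const, Finset.card_univ]
      field_simp
      ring
    have hAnn : 0 ≤ ∑ j, q j * (1 - q j) :=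
      Finset.sum_nonneg (fun j _ => mul_nonneg (hq j) (by linarith [hle1 j]))
    have hBnn : 0 ≤ ∑ j, (q j - 1 / n) ^ 2 :=
      Finset.sum_nonneg (fun j _ => sq_nonneg _)
    refine ⟨by linarith, by rw [one_mul]; linarith, ?_, ?_⟩
    · constructor
      · intro h
        have hB0 : ∑ j, (q j - 1 / n) ^ 2 = 0 := by rw [idB]; linarith [h]
        intro j
        have := (Finset.sum_eq_zero_iff_of_nonneg (fun i _ => sq_nonneg (q i - 1/n))).mp hB0 j (Finset.mem_univ j)
        have := pow_eq_zero_iff (n := 2) (by norm_num) |>.mp this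
        linarith
      · intro h
        have : ∑ j, q j ^ 2 = ∑ _j : Fin n, (1 / (n:ℝ)) ^ 2 := by
          apply Finset.sum_congr rfl; intro j _; rw [h j]
        rw [this]
        simp [Finset.sum_const, Finset.card_univ]
        field_simp
    · constructor
      · intro h
        intro _
        have hA0 : ∑ j, q j * (1 - q j) = 0 := by rw [idA]; linarith
        have hdich : ∀ j, q j = 0 ∨ q j = 1 := by
          intro j
          have := (Finset.sum_eq_zero_iff_of_nonneg
            (fun i _ => mul_nonneg (hq i) (by linarith [hle1 i]))).mp hA0 j (Finset.mem_univ j)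
          rcases mul_eq_zero.mp this with h1 | h1
          · exact Or.inl h1
          · right; linarith
        have hex : ∃ α, q α = 1 := by
          by_contra hc
          push_neg at hc
          have : ∀ j, q j = 0 := fun j => (hdich j).resolve_right (hc j)
          rw [Finset.sum_congr rfl (fun j _ => this j)] at hsum
          simp at hsum
        obtain ⟨α, hα⟩ := hex
        refine ⟨α, fun j => ?_⟩
        by_cases hj : j = α
        · simp [hj, hα]
        · simp [hj]
          have hsplit : q α + ∑ i ∈ Finset.univ.erase α, q i = 1 := by
            rw [Finset.add_sum_erase _ _ (Finset.mem_univ α), hsum]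
          have hrest : ∑ i ∈ Finset.univ.erase α, q i = 0 := by linarith
          exact (Finset.sum_eq_zero_iff_of_nonneg (fun i _ => hq i)).mp hrest j
            (Finset.mem_erase.mpr ⟨hj, Finset.mem_univ j⟩)
      · intro h
        obtain ⟨α, hα⟩ := h rfl
        have : ∑ j, q j ^ 2 = ∑ j, (if j = α then (1:ℝ) else 0) := by
          apply Finset.sum_congr rfl
          intro j _; rw [hα j]; by_cases hj : j = α <;> simp [hj]
        rw [this]
        simp


theorem stmt_11 (n : ℕ) (hn : 2 ≤ n) (P : Fin n → HypD) (s1 s2 : ℝ)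
    (hs1 : s1 = 0 ∨ s1 = 1) (hs2 : s2 = 0 ∨ s2 = 1) (hact : s1 = 1 ∨ s2 = 1)
    (hpos : ∀ j, 0 ≤ (P j).1 ∧ 0 ≤ (P j).2)
    (hsum1 : ∑ j, (P j).1 = s1) (hsum2 : ∑ j, (P j).2 = s2) :
    (0 ≤ s1 - ∑ j, (P j).1 ^ 2 ∧ 0 ≤ s2 - ∑ j, (P j).2 ^ 2) ∧
    (s1 - ∑ j, (P j).1 ^ 2 ≤ s1 * (1 - 1 / n) ∧
      s2 - ∑ j, (P j).2 ^ 2 ≤ s2 * (1 - 1 / n)) ∧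
    ((s1 - ∑ j, (P j).1 ^ 2 = s1 * (1 - 1 / n) ∧
        s2 - ∑ j, (P j).2 ^ 2 = s2 * (1 - 1 / n)) ↔
      ∀ j, P j = (s1 / n, s2 / n)) ∧
    ((s1 - ∑ j, (P j).1 ^ 2 = 0 ∧ s2 - ∑ j, (P j).2 ^ 2 = 0) ↔
      ((s1 = 1 → ∃ α : Fin n, ∀ j, (P j).1 = if j = α then 1 else 0) ∧
        (s2 = 1 → ∃ β : Fin n, ∀ j, (P j).2 = if j = β then 1 else 0))) := by
  obtain ⟨a1, b1, c1, d1⟩ := helper n hn (fun j => (P j).1) s1 hs1 (fun j => (hpos j).1) hsum1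
  obtain ⟨a2, b2, c2, d2⟩ := helper n hn (fun j => (P j).2) s2 hs2 (fun j => (hpos j).2) hsum2
  refine ⟨⟨a1, a2⟩, ⟨b1, b2⟩, ?_, ?_⟩
  · constructor
    · rintro ⟨ha, hb⟩ j
      exact Prod.ext (c1.mp ha j) (c2.mp hb j)
    · intro h
      exact ⟨c1.mpr (fun j => by rw [h j]), c2.mpr (fun j => by rw [h j])⟩
  · constructor
    · rintro ⟨ha, hb⟩
      exact ⟨d1.mp ha, d2.mp hb⟩
    · rintro ⟨ha, hb⟩
      exact ⟨d1.mpr ha, d2.mpr hb⟩
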